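/- Let R be an integral domain with trivial Picard group. If every nonzero proper ideal of R is a finite product of molecules, then R is atomic (every nonzero nonunit is a finite product of irreducible elements). -/

import Mathlib

theorem span_multiset_prod {R : Type*} [CommRing R] (f : Multiset R) :
    Ideal.span {f.prod} = (f.map (fun b => Ideal.span {b})).prod := by
  induction f using Multiset.induction with
  | empty => simp [Ideal.one_eq_top]
  | cons x t ih =>
    rw [Multiset.prod_cons, Multiset.map_cons, Multiset.prod_cons, ← ih,
      Ideal.span_singleton_mul_span_singleton]

/-- A molecular domain with trivial Picard group is atomic. -/
theorem stmt_2 {R : Type*} [CommRing R] [IsDomain R]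
    (hPic : ∀ I : Ideal R,
      IsUnit (I : FractionalIdeal (nonZeroDivisors R) (FractionRing R)) →
        Submodule.IsPrincipal I)
    (hmolec : ∀ I : Ideal R, I ≠ ⊥ → I ≠ ⊤ →
      ∃ s : Multiset (Ideal R),
        (∀ J ∈ s, J ≠ ⊥ ∧ J ≠ ⊤ ∧
          ∀ A B : Ideal R, J = A * B → A = ⊤ ∨ B = ⊤) ∧ I = s.prod) :
    ∀ a : R, a ≠ 0 → ¬IsUnit a →
      ∃ f : Multiset R, (∀ b ∈ f, Irreducible b) ∧ Associated f.prod a := by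
  intro a ha hau
  obtain ⟨s, hs, hprod⟩ := hmolec (Ideal.span {a})
    (by simpa [Ideal.span_singleton_eq_bot] using ha)
    (by simpa [Ideal.span_singleton_eq_top] using hau)
  set K := FractionRing R
  have hainv : IsUnit ((Ideal.span {a} : Ideal R) : FractionalIdeal (nonZeroDivisors R) K) := by
    rw [FractionalIdeal.coeIdeal_span_singleton]
    have hx : (algebraMap R K a) ≠ 0 := by
      simpa using (map_ne_zero_iff _ (IsFractionRing.injective R K)).mpr ha
    exact IsUnit.of_mul_eq_one _ (by
      rw [FractionalIdeal.spanSingleton_mul_spanSingleton, mul_inv_cancel₀ hx,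
        FractionalIdeal.spanSingleton_one])
  have hunit : ∀ J ∈ s, IsUnit ((J : Ideal R) : FractionalIdeal (nonZeroDivisors R) K) := by
    intro J hJ
    obtain ⟨t, ht⟩ := Multiset.exists_cons_of_mem hJ
    have : IsUnit ((s.prod : Ideal R) : FractionalIdeal (nonZeroDivisors R) K) := by
      rwa [← hprod]
    rw [ht, Multiset.prod_cons, FractionalIdeal.coeIdeal_mul] at this
    exact isUnit_of_mul_isUnit_left this
  choose g hg using fun (J : Ideal R) (hJ : J ∈ s) => (hPic J (hunit J hJ)).principal
  let f : Multiset R := s.attach.map (fun J => g J.1 J.2)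
  have hmap : f.map (fun b => Ideal.span {b}) = s := by
    simp only [f, Multiset.map_map, Function.comp]
    have : ∀ x ∈ s.attach, Ideal.span {g x.1 x.2} = x.1 := fun x _ => (hg x.1 x.2).symm
    rw [Multiset.map_congr rfl this, Multiset.attach_map_val]
  refine ⟨f, ?_, ?_⟩
  · intro b hb
    simp only [f, Multiset.mem_map, Multiset.mem_attach, true_and] at hb
    obtain ⟨⟨J, hJ⟩, rfl⟩ := hb
    obtain ⟨hJ0, hJt, hJm⟩ := hs J hJ
    have hJg : J = Ideal.span {g J hJ} := hg J hJ
    constructor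
    · intro hu
      exact hJt (by rw [hJg, Ideal.span_singleton_eq_top]; exact hu)
    · intro b c hbc
      have : J = Ideal.span {b} * Ideal.span {c} := by
        rw [hJg, hbc, Ideal.span_singleton_mul_span_singleton]
      rcases hJm _ _ this with h | h
      · exact Or.inl (by rwa [Ideal.span_singleton_eq_top] at h)
      · exact Or.inr (by rwa [Ideal.span_singleton_eq_top] at h)
  · rw [← Ideal.span_singleton_eq_span_singleton, span_multiset_prod, hmap, ← hprod]
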